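/- arXiv:2206.01032 — 5 statements merged into one kernel-verified Lean document; each statement's English description precedes it below -/
import Mathlib

section
/- (Only-if direction of the equivalence theorem.) Let (S, τ) be a sequential abstract-state system over a language L with only function symbols (so S is a nonempty set of states, τ : S → S preserves carriers, S is closed under isomorphism, and every isomorphism between states in S is also an isomorphism between their τ-images). If a finite set T of closed L-terms is a new bounded-exploration witness for (S, τ), then T is also an original bounded-exploration witness for (S, τ): whenever states X, Y ∈ S coincide over T, then Δ(X) = Δ(Y). -/
/-- A first-order language with only function symbols:
`Func n` is the set of `n`-ary function symbols. -/
structure Lang where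
  Func : ℕ → Type

/-- Closed terms of the language `L`. -/
inductive CTerm (L : Lang) : Type
  | app : ∀ {n : ℕ}, L.Func n → (Fin n → CTerm L) → CTerm L

/-- `CTerm.Subterm s t` means `s` is a subterm of `t`. -/
inductive CTerm.Subterm {L : Lang} : CTerm L → CTerm L → Prop
  | refl (t : CTerm L) : CTerm.Subterm t t
  | app {n : ℕ} (f : L.Func n) (ts : Fin n → CTerm L) (i : Fin n) {s : CTerm L} :
      CTerm.Subterm s (ts i) → CTerm.Subterm s (CTerm.app f ts)

/-- A set of closed terms is closed under subterms. -/
def SubtermClosed {L : Lang} (T : Set (CTerm L)) : Prop :=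
  ∀ s t : CTerm L, CTerm.Subterm s t → t ∈ T → s ∈ T

/-- A state: an `L`-structure whose carrier is a subset of `U`.
Function symbols are interpreted as operations mapping carrier elements
to carrier elements. -/
structure State (L : Lang) (U : Type*) where
  carrier : Set U
  interp : ∀ {n : ℕ}, L.Func n → (Fin n → U) → U
  interp_mem : ∀ {n : ℕ} (f : L.Func n) (x : Fin n → U),
    (∀ i, x i ∈ carrier) → interp f x ∈ carrier

/-- The value `V_X(t)` of a closed term `t` in the state `X`. -/
def State.val {L : Lang} {U : Type*} (X : State L U) : CTerm L → U
  | .app f ts => X.interp f (fun i => X.val (ts i))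

/-- `ξ` is an isomorphism from state `X` onto state `Y`. -/
def IsIso {L : Lang} {U : Type*} (ξ : U → U) (X Y : State L U) : Prop :=
  Set.BijOn ξ X.carrier Y.carrier ∧
  ∀ {n : ℕ} (f : L.Func n) (x : Fin n → U), (∀ i, x i ∈ X.carrier) →
    ξ (X.interp f x) = Y.interp f (fun i => ξ (x i))

/-- A sequential abstract-state system `(S, τ)`. -/
structure ASM (L : Lang) (U : Type*) where
  S : Set (State L U)
  nonempty : S.Nonempty
  τ : State L U → State L U
  mapsTo : ∀ X ∈ S, τ X ∈ S
  carrier_τ : ∀ X ∈ S, (τ X).carrier = X.carrier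
  closedIso : ∀ X ∈ S, ∀ (Y : State L U) (ξ : U → U), IsIso ξ X Y → Y ∈ S
  isoτ : ∀ X ∈ S, ∀ Y ∈ S, ∀ ξ : U → U, IsIso ξ X Y → IsIso ξ (τ X) (τ Y)

/-- An update `(f, (x_1, …, x_j), x_0)`. -/
structure Update (L : Lang) (U : Type*) where
  arity : ℕ
  f : L.Func arity
  args : Fin arity → U
  val : U

/-- `u` is an update of the state `X` (in the system `A`): all its components are
in the carrier of `X` and the interpretation of `u.f` in `τ(X)` maps `u.args` to `u.val`. -/
def IsUpd {L : Lang} {U : Type*} (A : ASM L U) (X : State L U) (u : Update L U) : Prop :=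
  (∀ i, u.args i ∈ X.carrier) ∧ u.val ∈ X.carrier ∧ (A.τ X).interp u.f u.args = u.val

/-- `Δ A X` : the set of nontrivial updates of `X`. -/
def Δ {L : Lang} {U : Type*} (A : ASM L U) (X : State L U) : Set (Update L U) :=
  {u | IsUpd A X u ∧ X.interp u.f u.args ≠ u.val}

/-- States `X` and `Y` coincide over the set `T` of closed terms. -/
def Coincide {L : Lang} {U : Type*} (T : Set (CTerm L)) (X Y : State L U) : Prop :=
  ∀ t ∈ T, X.val t = Y.val t

/-- States `X` and `Y` are `T`-similar. -/
def TSimilar {L : Lang} {U : Type*} (T : Set (CTerm L)) (X Y : State L U) : Prop :=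
  ∀ s ∈ T, ∀ t ∈ T, (X.val s = X.val t ↔ Y.val s = Y.val t)

/-- `σ` is (an extension of) the similarity function from `V_X(T)` to `V_Y(T)`:
`σ(V_X(t)) = V_Y(t)` for all `t ∈ T`. -/
def SimFun {L : Lang} {U : Type*} (T : Set (CTerm L)) (X Y : State L U) (σ : U → U) : Prop :=
  ∀ t ∈ T, σ (X.val t) = Y.val t

/-- An element `x` of `X` is `T`-accessible. -/
def AccElem {L : Lang} {U : Type*} (T : Set (CTerm L)) (X : State L U) (x : U) : Prop :=
  ∃ t ∈ T, X.val t = x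

/-- An update is `T`-accessible if all its element components are `T`-accessible. -/
def AccUpd {L : Lang} {U : Type*} (T : Set (CTerm L)) (X : State L U) (u : Update L U) : Prop :=
  AccElem T X u.val ∧ ∀ i, AccElem T X (u.args i)

/-- A set of updates of `X` is `T`-accessible. -/
def AccSet {L : Lang} {U : Type*} (T : Set (CTerm L)) (X : State L U)
    (D : Set (Update L U)) : Prop :=
  ∀ u ∈ D, AccUpd T X u

/-- The action of a function `σ` on an update:
`σ(f, (x_1, …, x_j), x_0) = (f, (σx_1, …, σx_j), σx_0)`. -/
def Update.map {L : Lang} {U : Type*} (σ : U → U) (u : Update L U) : Update L U :=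
  ⟨u.arity, u.f, fun i => σ (u.args i), σ u.val⟩

/-- `T` is an original bounded-exploration witness for `A`. -/
def OrigWitness {L : Lang} {U : Type*} (A : ASM L U) (T : Set (CTerm L)) : Prop :=
  ∀ X ∈ A.S, ∀ Y ∈ A.S, Coincide T X Y → Δ A X = Δ A Y

/-- `T` is a new bounded-exploration witness for `A`. -/
def NewWitness {L : Lang} {U : Type*} (A : ASM L U) (T : Set (CTerm L)) : Prop :=
  SubtermClosed T ∧
  (∀ X ∈ A.S, AccSet T X (Δ A X)) ∧
  (∀ X ∈ A.S, ∀ Y ∈ A.S, TSimilar T X Y → ∀ σ : U → U, SimFun T X Y σ →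
    ∀ u : Update L U, IsUpd A X u → AccUpd T X u →
      (u ∈ Δ A X ↔ Update.map σ u ∈ Δ A Y))

/-- only-if direction: for a sequential abstract-state system,
every finite new bounded-exploration witness is also an original
bounded-exploration witness. -/
theorem new_witness_implies_orig_witness
    {L : Lang} {U : Type*} (A : ASM L U) (T : Set (CTerm L)) (hfin : T.Finite)
    (hnew : NewWitness A T) : OrigWitness A T := by
  obtain ⟨-, hacc, hmain⟩ := hnew
  intro X hX Y hY hco
  have hco' : Coincide T Y X := fun t ht => (hco t ht).symm
  have key : ∀ Z ∈ A.S, ∀ W ∈ A.S, Coincide T Z W → Δ A Z ⊆ Δ A W := by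
    intro Z hZ W hW hc u hu
    have hsim : TSimilar T Z W := fun s hs t ht => by
      rw [hc s hs, hc t ht]
    have hsf : SimFun T Z W id := fun t ht => hc t ht
    have := (hmain Z hZ W hW hsim id hsf u hu.1 (hacc Z hZ u hu)).mp hu
    simpa [Update.map] using this
  exact Set.Subset.antisymm (key X hX Y hY hco) (key Y hY X hX hco')
end

section
/- (If direction of the equivalence theorem.) Let (S, τ) be a sequential abstract-state system over a language L with only function symbols, and assume additionally that for every state X ∈ S and every finite subset F of U there is an isomorphism from X onto some state X' ∈ S whose carrier is disjoint from F. Let T be a finite set of closed L-terms, closed under subterms, that is an original bounded-exploration witness and such that Δ(X) is T-accessible for every X ∈ S. Then T is a new bounded-exploration witness: for all T-similar states X, Y ∈ S with similarity function σ, and every T-accessible update u of X, u ∈ Δ(X) ⟺ σ(u) ∈ Δ(Y). -/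
section Aux
variable {L : Lang} {U : Type*}

lemma State.val_mem (X : State L U) (t : CTerm L) : X.val t ∈ X.carrier := by
  induction t with
  | app f ts ih => exact X.interp_mem f _ (fun i => ih i)

lemma iso_val {ξ : U → U} {X Y : State L U} (h : IsIso ξ X Y) (t : CTerm L) :
    ξ (X.val t) = Y.val t := by
  induction t with
  | app f ts ih =>
    show ξ (X.interp f (fun i => X.val (ts i))) = Y.interp f (fun i => Y.val (ts i))
    rw [h.2 f _ (fun i => X.val_mem (ts i))]
    congr 1
    funext i
    exact ih i

lemma iso_comp {ξ ζ : U → U} {X Y Z : State L U} (h1 : IsIso ξ X Y) (h2 : IsIso ζ Y Z) :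
    IsIso (ζ ∘ ξ) X Z := by
  refine ⟨h2.1.comp h1.1, ?_⟩
  intro n f x hx
  show ζ (ξ (X.interp f x)) = _
  rw [h1.2 f x hx, h2.2 f _ (fun i => h1.1.mapsTo (hx i))]
  rfl

lemma iso_delta (A : ASM L U) {X Y : State L U} (hX : X ∈ A.S) (hY : Y ∈ A.S)
    {η : U → U} (hη : IsIso η X Y) (u : Update L U)
    (hargs : ∀ i, u.args i ∈ X.carrier) (hval : u.val ∈ X.carrier) :
    u ∈ Δ A X ↔ Update.map η u ∈ Δ A Y := by
  have hτ : IsIso η (A.τ X) (A.τ Y) := A.isoτ X hX Y hY η hη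
  have hcX : (A.τ X).carrier = X.carrier := A.carrier_τ X hX
  have hargsτ : ∀ i, u.args i ∈ (A.τ X).carrier := fun i => hcX.symm ▸ hargs i
  have hτeq : η ((A.τ X).interp u.f u.args) = (A.τ Y).interp u.f (fun i => η (u.args i)) :=
    hτ.2 u.f u.args hargsτ
  have hXeq : η (X.interp u.f u.args) = Y.interp u.f (fun i => η (u.args i)) :=
    hη.2 u.f u.args hargs
  have hmemτ : (A.τ X).interp u.f u.args ∈ X.carrier :=
    hcX ▸ (A.τ X).interp_mem u.f u.args hargsτ
  have hmemX : X.interp u.f u.args ∈ X.carrier := X.interp_mem u.f u.args hargs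
  constructor
  · rintro ⟨⟨_, _, heq⟩, hne⟩
    refine ⟨⟨fun i => hη.1.mapsTo (hargs i), hη.1.mapsTo hval, ?_⟩, ?_⟩
    · show (A.τ Y).interp u.f (fun i => η (u.args i)) = η u.val
      rw [← hτeq, heq]
    · show Y.interp u.f (fun i => η (u.args i)) ≠ η u.val
      intro hc
      rw [← hXeq] at hc
      exact hne (hη.1.injOn hmemX hval hc)
  · rintro ⟨⟨_, _, heq⟩, hne⟩
    have heq' : (A.τ Y).interp u.f (fun i => η (u.args i)) = η u.val := heq
    have hne' : Y.interp u.f (fun i => η (u.args i)) ≠ η u.val := hne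
    refine ⟨⟨hargs, hval, ?_⟩, ?_⟩
    · apply hη.1.injOn hmemτ hval
      rw [hτeq, heq']
    · intro hc
      apply hne'
      rw [← hXeq, hc]

end Aux

/-- if direction: assume that every state has an isomorphic copy in `S`
whose carrier avoids any given finite subset of `U`.  If `T` is a finite,
subterm-closed, original bounded-exploration witness such that `Δ(X)` is
`T`-accessible for every state `X`, then `T` is a new bounded-exploration witness. -/
theorem orig_witness_implies_new_witness
    {L : Lang} {U : Type*} (A : ASM L U)
    (hfresh : ∀ X ∈ A.S, ∀ F : Set U, F.Finite →
      ∃ X' ∈ A.S, (∃ ξ : U → U, IsIso ξ X X') ∧ Disjoint X'.carrier F)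
    (T : Set (CTerm L)) (hfin : T.Finite) (hsub : SubtermClosed T)
    (horig : OrigWitness A T)
    (hacc : ∀ X ∈ A.S, AccSet T X (Δ A X)) :
    NewWitness A T := by
  classical
  refine ⟨hsub, hacc, ?_⟩
  intro X hX Y hY hsim σ hσ u _hupd haccu
  obtain ⟨Y', hY'S, ⟨ξ, hξ⟩, hdisj⟩ := hfresh Y hY (X.val '' T) (hfin.image _)
  have key : ∀ s ∈ T, ∀ t ∈ T, Y'.val s = Y'.val t → X.val s = X.val t := by
    intro s hs t ht h
    have h1 : ξ (Y.val s) = ξ (Y.val t) := by rw [iso_val hξ s, iso_val hξ t]; exact h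
    exact (hsim s hs t ht).mpr (hξ.1.injOn (Y.val_mem s) (Y.val_mem t) h1)
  obtain ⟨ζ, hζT, hζid⟩ : ∃ ζ : U → U, (∀ t ∈ T, ζ (Y'.val t) = X.val t) ∧
      (∀ z, (∀ t ∈ T, Y'.val t ≠ z) → ζ z = z) := by
    refine ⟨fun z => if h : ∃ t ∈ T, Y'.val t = z then X.val h.choose else z, ?_, ?_⟩
    · intro t ht
      have h : ∃ s ∈ T, Y'.val s = Y'.val t := ⟨t, ht, rfl⟩
      simp only [dif_pos h]
      exact key _ h.choose_spec.1 t ht h.choose_spec.2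
    · intro z hz
      exact dif_neg (by push_neg; exact hz)
  have hinj : Set.InjOn ζ Y'.carrier := by
    intro a ha b hb hab
    by_cases h1 : ∃ t ∈ T, Y'.val t = a
    · obtain ⟨s, hs, rfl⟩ := h1
      by_cases h2 : ∃ t ∈ T, Y'.val t = b
      · obtain ⟨t, ht, rfl⟩ := h2
        rw [hζT s hs, hζT t ht] at hab
        have hYst : Y.val s = Y.val t := (hsim s hs t ht).mp hab
        calc Y'.val s = ξ (Y.val s) := (iso_val hξ s).symm
          _ = ξ (Y.val t) := by rw [hYst]
          _ = Y'.val t := iso_val hξ t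
      · push_neg at h2
        rw [hζT s hs, hζid b h2] at hab
        exact absurd (⟨s, hs, hab⟩ : b ∈ X.val '' T) (Set.disjoint_left.mp hdisj hb)
    · push_neg at h1
      by_cases h2 : ∃ t ∈ T, Y'.val t = b
      · obtain ⟨t, ht, rfl⟩ := h2
        rw [hζid a h1, hζT t ht] at hab
        exact absurd (⟨t, ht, hab.symm⟩ : a ∈ X.val '' T) (Set.disjoint_left.mp hdisj ha)
      · push_neg at h2
        rw [hζid a h1, hζid b h2] at hab
        exact hab
  have _ : Nonempty U := ⟨u.val⟩
  set inv := Function.invFunOn ζ Y'.carrier with hinvdef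
  set Z : State L U :=
    ⟨ζ '' Y'.carrier, fun {n} f x => ζ (Y'.interp f (fun i => inv (x i))),
     fun {n} f x hx => Set.mem_image_of_mem ζ
       (Y'.interp_mem f _ (fun i => Function.invFunOn_mem ((Set.mem_image _ _ _).mp (hx i))))⟩
    with hZdef
  have hζiso : IsIso ζ Y' Z := by
    refine ⟨hinj.bijOn_image, ?_⟩
    intro n f y hy
    show ζ (Y'.interp f y) = ζ (Y'.interp f (fun i => inv (ζ (y i))))
    congr 1
    congr 1
    funext i
    exact (hinj.leftInvOn_invFunOn (hy i)).symm
  have hZS : Z ∈ A.S := A.closedIso Y' hY'S Z ζ hζiso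
  have hcoinc : Coincide T X Z := by
    intro t ht
    rw [← iso_val hζiso t, hζT t ht]
  have hΔ : Δ A X = Δ A Z := horig X hX Z hZS hcoinc
  have hη : IsIso (ζ ∘ ξ) Y Z := iso_comp hξ hζiso
  have hησ : ∀ t ∈ T, (ζ ∘ ξ) (Y.val t) = X.val t := by
    intro t ht
    show ζ (ξ (Y.val t)) = X.val t
    rw [iso_val hξ t, hζT t ht]
  obtain ⟨⟨t0, ht0, hval0⟩, hargsacc⟩ := haccu
  have hargsY : ∀ i, (Update.map σ u).args i ∈ Y.carrier := by
    intro i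
    obtain ⟨t, ht, hvt⟩ := hargsacc i
    show σ (u.args i) ∈ Y.carrier
    rw [← hvt, hσ t ht]
    exact Y.val_mem t
  have hvalY : (Update.map σ u).val ∈ Y.carrier := by
    show σ u.val ∈ Y.carrier
    rw [← hval0, hσ t0 ht0]
    exact Y.val_mem t0
  have hu : Update.map (ζ ∘ ξ) (Update.map σ u) = u := by
    obtain ⟨n, f, args, v⟩ := u
    show Update.mk n f (fun i => (ζ ∘ ξ) (σ (args i))) ((ζ ∘ ξ) (σ v)) = Update.mk n f args v
    have h1 : (fun i => (ζ ∘ ξ) (σ (args i))) = args := by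
      funext i
      obtain ⟨t, ht, hvt⟩ := hargsacc i
      dsimp only at hvt
      show (ζ ∘ ξ) (σ (args i)) = args i
      rw [← hvt, hσ t ht, hησ t ht]
    have h2 : (ζ ∘ ξ) (σ v) = v := by
      have hval0' : X.val t0 = v := hval0
      rw [← hval0', hσ t0 ht0, hησ t0 ht0]
    rw [h1, h2]
  have hlem := iso_delta A hY hZS hη (Update.map σ u) hargsY hvalY
  rw [hu] at hlem
  rw [hΔ]
  exact hlem.symm
end

section
/- If T ⊆ T' are sets of closed L-terms, both closed under subterms, and T is a new bounded-exploration witness for a sequential abstract-state system (S, τ), then T' is also a new bounded-exploration witness: Δ(X) is T'-accessible for every X ∈ S, and for all T'-similar states X, Y ∈ S with similarity function σ' : V_X(T') → V_Y(T') and every T'-accessible update u of X, u ∈ Δ(X) ⟺ σ'(u) ∈ Δ(Y). -/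
/-- if `T ⊆ T'` are both closed under subterms and `T` is a new
bounded-exploration witness, then so is `T'`. -/
theorem new_witness_mono
    {L : Lang} {U : Type*} (A : ASM L U) (T T' : Set (CTerm L)) (hTT' : T ⊆ T')
    (hT'sub : SubtermClosed T')
    (hT : NewWitness A T) : NewWitness A T' := by
  obtain ⟨hTsub, hacc, hsim3⟩ := hT
  refine ⟨hT'sub, ?_, ?_⟩
  · intro X hX u hu
    obtain ⟨⟨t, ht, hv⟩, hargs⟩ := hacc X hX u hu
    exact ⟨⟨t, hTT' ht, hv⟩, fun i => (hargs i).elim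
      fun s hs => ⟨s, hTT' hs.1, hs.2⟩⟩
  · intro X hX Y hY hsim σ hσ u hu haccu
    have hsimT : TSimilar T X Y := fun s hs t ht => hsim s (hTT' hs) t (hTT' ht)
    have hσT : SimFun T X Y σ := fun t ht => hσ t (hTT' ht)
    constructor
    · intro hΔ
      exact (hsim3 X hX Y hY hsimT σ hσT u hu (hacc X hX u hΔ)).mp hΔ
    · intro hΔ'
      have accY := hacc Y hY _ hΔ'
      have inj : ∀ a, AccElem T' X a → AccElem T Y (σ a) → AccElem T X a := by
        rintro a ⟨s, hs, hsv⟩ ⟨t, ht, htv⟩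
        refine ⟨t, ht, ?_⟩
        have h1 : Y.val t = Y.val s := by
          rw [htv, ← hsv, hσ s hs]
        have h2 : X.val t = X.val s := (hsim t (hTT' ht) s hs).mpr h1
        rw [h2, hsv]
      have accX : AccUpd T X u := by
        obtain ⟨hv', hargs'⟩ := accY
        exact ⟨inj u.val haccu.1 hv', fun i => inj (u.args i) (haccu.2 i) (hargs' i)⟩
      exact (hsim3 X hX Y hY hsimT σ hσT u hu accX).mpr hΔ'
end

section
/- Let (S, τ) be a sequential abstract-state system over a language L with only function symbols, and let ξ be an isomorphism from a state X ∈ S onto a state X' ∈ S. Then ξ maps the update set of X onto the update set of X': Δ(X') = { (f, (ξx_1, …, ξx_j), ξx_0) : (f, (x_1, …, x_j), x_0) ∈ Δ(X) }. -/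
/-- an isomorphism `ξ` from a state `X ∈ S` onto a state `X' ∈ S`
maps the update set of `X` onto the update set of `X'`:
`Δ(X') = ξ(Δ(X))`. -/
theorem iso_maps_update_set
    {L : Lang} {U : Type*} (A : ASM L U) (X X' : State L U)
    (hX : X ∈ A.S) (hX' : X' ∈ A.S) (ξ : U → U) (hξ : IsIso ξ X X') :
    Δ A X' = Update.map ξ '' Δ A X := by
  obtain ⟨hbij, hcomm⟩ := hξ
  have hτ := A.isoτ X hX X' hX' ξ ⟨hbij, hcomm⟩
  obtain ⟨hbijτ, hcommτ⟩ := hτ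
  have hcX : (A.τ X).carrier = X.carrier := A.carrier_τ X hX
  have hcX' : (A.τ X').carrier = X'.carrier := A.carrier_τ X' hX'
  ext u'
  constructor
  · rintro ⟨⟨hargs, hval, heq⟩, hne⟩
    choose g hg using fun i => hbij.2.2 (hargs i)
    obtain ⟨x0, hx0, hx0e⟩ := hbij.2.2 hval
    refine ⟨⟨u'.arity, u'.f, g, x0⟩, ⟨⟨fun i => (hg i).1, hx0, ?_⟩, ?_⟩, ?_⟩
    · dsimp only
      have hmem : (A.τ X).interp u'.f g ∈ X.carrier := by
        rw [← hcX]
        exact (A.τ X).interp_mem _ _ (fun i => hcX ▸ (hg i).1)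
      apply hbij.2.1 hmem hx0
      rw [hcommτ u'.f g (fun i => hcX ▸ (hg i).1), hx0e]
      have h1 : (fun i => ξ (g i)) = u'.args := funext fun i => (hg i).2
      rw [h1]
      exact heq
    · intro h
      apply hne
      have hm : X.interp u'.f g ∈ X.carrier := X.interp_mem _ _ (fun i => (hg i).1)
      have := hcomm u'.f g (fun i => (hg i).1)
      have hargse : (fun i => ξ (g i)) = u'.args := funext fun i => (hg i).2
      rw [h, hx0e] at this
      rw [hargse] at this
      exact this.symm
    · obtain ⟨n, f, args, v⟩ := u'
      simp only [Update.map, Update.mk.injEq, heq_eq_eq, true_and]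
      exact ⟨funext fun i => (hg i).2, hx0e⟩
  · rintro ⟨u, ⟨⟨hargs, hval, heq⟩, hne⟩, rfl⟩
    refine ⟨⟨fun i => hbij.1 (hargs i), hbij.1 hval, ?_⟩, ?_⟩
    · have := hcommτ u.f u.args (fun i => hcX ▸ hargs i)
      rw [heq] at this
      exact this.symm
    · intro h
      apply hne
      simp only [Update.map] at h
      have := hcomm u.f u.args hargs
      rw [h] at this
      exact hbij.2.1 (X.interp_mem _ _ hargs) hval this
end

section
/- (Example, failure of the original bounded-exploration postulate.) Let L be the first-order language with a single constant f, let U be a set with at least three elements, and define the sequential abstract-state system A as follows: the states are all pairs X = (D, v) where D ⊆ U has exactly two elements and the interpretation f_X = v ∈ D; τ(D, v) = (D, w) where w is the other element of D. Then A does not satisfy the original bounded-exploration postulate: for every set T of closed L-terms there exist states X and Y with V_X(t) = V_Y(t) for all t ∈ T but Δ(X) ≠ Δ(Y). Concretely, for distinct a, b, c ∈ U, the states X = ({a, b}, a) and Y = ({a, c}, a) coincide over every set of closed L-terms, yet Δ(X) = {(f, b)} ≠ {(f, c)} = Δ(Y). -/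
/-- The language with a single nonlogical symbol: a constant (`0`-ary function symbol) `f`. -/
inductive OneC : ℕ → Type
  | f : OneC 0

/-- That language as a `Lang`. -/
def L1 : Lang := ⟨OneC⟩

lemma fin0_eq {U : Type*} (g : Fin 0 → U) : g = ![] := by
  funext i; exact Fin.elim0 i

lemma val_const {U : Type*} (X : State L1 U) (a : U) (h : X.interp OneC.f ![] = a) :
    ∀ t : CTerm L1, X.val t = a := by
  intro t
  cases t with
  | app g ts =>
  cases g
  show X.interp OneC.f (fun i => X.val (ts i)) = a
  rw [fin0_eq (fun i => X.val (ts i))]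
  exact h

lemma delta_eq {U : Type*} (A : ASM L1 U)
    (hτ : ∀ X ∈ A.S, ∀ a b : U, a ≠ b → X.carrier = {a, b} →
      X.interp OneC.f ![] = a → (A.τ X).interp OneC.f ![] = b)
    (X : State L1 U) (hX : X ∈ A.S) (a b : U) (hab : a ≠ b)
    (hcar : X.carrier = {a, b}) (hi : X.interp OneC.f ![] = a) :
    Δ A X = {(⟨0, OneC.f, ![], b⟩ : Update L1 U)} := by
  have hτX : (A.τ X).interp OneC.f ![] = b := hτ X hX a b hab hcar hi
  ext u
  obtain ⟨n, g, args, v⟩ := u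
  cases g
  have hargs : args = ![] := fin0_eq args
  subst hargs
  constructor
  · rintro ⟨⟨-, hv, hval⟩, hne⟩
    change (A.τ X).interp OneC.f ![] = v at hval
    have hvb : v = b := by rw [← hval, hτX]
    simp [Set.mem_singleton_iff, hvb]
  · intro h
    have hvb : v = b := congrArg Update.val (Set.mem_singleton_iff.mp h)
    subst hvb
    refine ⟨⟨fun i => Fin.elim0 i, ?_, hτX⟩, ?_⟩
    · rw [hcar]; right; rfl
    · rw [hi]; exact hab

/-- Example: failure of the original bounded-exploration postulate:
in the system whose states are the pairs `X = ({a, b}, v)` with `a ≠ b` in `U` and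
`v = f_X ∈ {a, b}`, and whose one-step transformation flips the value of `f`,
for every set `T` of closed terms there are states coinciding over `T` with
different update sets.  Concretely, for distinct `a, b, c ∈ U`, the states
`X = ({a, b}, a)` and `Y = ({a, c}, a)` coincide over every set of closed terms,
yet `Δ(X) = {(f, b)} ≠ {(f, c)} = Δ(Y)`. -/
theorem example_orig_postulate_fails
    {U : Type*} (A : ASM L1 U)
    (hS : A.S = {X : State L1 U | ∃ a b : U, a ≠ b ∧ X.carrier = {a, b}})
    (hτ : ∀ X ∈ A.S, ∀ a b : U, a ≠ b → X.carrier = {a, b} →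
      X.interp OneC.f ![] = a → (A.τ X).interp OneC.f ![] = b)
    (a b c : U) (hab : a ≠ b) (hac : a ≠ c) (hbc : b ≠ c) :
    (∀ T : Set (CTerm L1), ∃ X ∈ A.S, ∃ Y ∈ A.S,
      Coincide T X Y ∧ Δ A X ≠ Δ A Y) ∧
    ∀ X ∈ A.S, ∀ Y ∈ A.S,
      X.carrier = {a, b} → X.interp OneC.f ![] = a →
      Y.carrier = {a, c} → Y.interp OneC.f ![] = a →
      (∀ t : CTerm L1, X.val t = Y.val t) ∧
      Δ A X = {(⟨0, OneC.f, ![], b⟩ : Update L1 U)} ∧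
      Δ A Y = {(⟨0, OneC.f, ![], c⟩ : Update L1 U)} ∧
      Δ A X ≠ Δ A Y := by
  have key : ∀ X ∈ A.S, ∀ Y ∈ A.S,
      X.carrier = {a, b} → X.interp OneC.f ![] = a →
      Y.carrier = {a, c} → Y.interp OneC.f ![] = a →
      (∀ t : CTerm L1, X.val t = Y.val t) ∧
      Δ A X = {(⟨0, OneC.f, ![], b⟩ : Update L1 U)} ∧
      Δ A Y = {(⟨0, OneC.f, ![], c⟩ : Update L1 U)} ∧
      Δ A X ≠ Δ A Y := by
    intro X hX Y hY hXc hXi hYc hYi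
    have h1 := delta_eq A hτ X hX a b hab hXc hXi
    have h2 := delta_eq A hτ Y hY a c hac hYc hYi
    refine ⟨fun t => by rw [val_const X a hXi, val_const Y a hYi], h1, h2, ?_⟩
    rw [h1, h2]
    intro h
    have : (⟨0, OneC.f, ![], b⟩ : Update L1 U) = ⟨0, OneC.f, ![], c⟩ := by
      rw [← Set.mem_singleton_iff, ← h]; rfl
    have : b = c := congrArg Update.val this
    exact hbc this
  refine ⟨?_, key⟩
  intro T
  refine ⟨⟨{a, b}, fun _ _ => a, fun _ _ _ => by left; rfl⟩, ?_,
          ⟨{a, c}, fun _ _ => a, fun _ _ _ => by left; rfl⟩, ?_, ?_, ?_⟩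
  · rw [hS]; exact ⟨a, b, hab, rfl⟩
  · rw [hS]; exact ⟨a, c, hac, rfl⟩
  · intro t _
    rw [val_const _ a rfl, val_const _ a rfl]
  · exact ((key _ (by rw [hS]; exact ⟨a, b, hab, rfl⟩) _ (by rw [hS]; exact ⟨a, c, hac, rfl⟩)
      rfl rfl rfl rfl).2.2.2)
end
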